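/- Every unit square graph of height 2 admits a conflict-free 2-coloring. That is, if V is a finite set and p : V → ℝ² assigns to each vertex a point whose y-coordinate lies in [0, 2], then the simple graph on V in which distinct u, v are adjacent if and only if the Chebyshev (ℓ∞) distance between p(u) and p(v) is at most 2 admits a conflict-free 2-coloring. -/

import Mathlib

/-- A conflict-free coloring of `G` with `k` colors: a partial coloring
(uncolored vertices get `none`) such that every vertex has, in its closed
neighborhood, a colored vertex whose color occurs exactly once there. -/
def IsCFColoring {V : Type*} (G : SimpleGraph V) {k : ℕ} (χ : V → Option (Fin k)) : Prop :=
  ∀ v : V, ∃ u ∈ insert v (G.neighborSet v), (χ u).isSome ∧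
    ∀ w ∈ insert v (G.neighborSet v), χ w = χ u → w = u

/-- `G` admits a conflict-free coloring with `k` colors. -/
def HasCFColoring {V : Type*} (G : SimpleGraph V) (k : ℕ) : Prop :=
  ∃ χ : V → Option (Fin k), IsCFColoring G χ

/-- The unit square graph on points `p`: distinct vertices are adjacent iff the
Chebyshev (ℓ∞) distance of their points is at most 2 (the axis-aligned squares
of side length 2 centered at the points intersect). -/
def unitSquareGraph {V : Type*} (p : V → ℝ × ℝ) : SimpleGraph V where
  Adj u v := u ≠ v ∧ max |(p u).1 - (p v).1| |(p u).2 - (p v).2| ≤ 2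
  symm := by
    constructor
    intro u v ⟨h1, h2⟩
    exact ⟨h1.symm, by rwa [abs_sub_comm ((p v).1), abs_sub_comm ((p v).2)]⟩
  loopless := by
    constructor
    intro v ⟨h1, _⟩
    exact h1 rfl

theorem stmt10 {V : Type*} [Fintype V] (p : V → ℝ × ℝ)
    (hp : ∀ v : V, (p v).2 ∈ Set.Icc (0 : ℝ) 2) :
    HasCFColoring (unitSquareGraph p) 2 := by
  classical
  set cell : V → ℤ := fun v => ⌊(p v).1 / 2⌋ with hcelldef
  have hb : ∀ v : V, 2 * (cell v : ℝ) ≤ (p v).1 ∧ (p v).1 < 2 * (cell v) + 2 := by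
    intro v
    have h1 : (cell v : ℝ) ≤ (p v).1 / 2 := Int.floor_le _
    have h2 : (p v).1 / 2 < cell v + 1 := Int.lt_floor_add_one _
    constructor <;> push_cast <;> linarith
  have L1 : ∀ u v : V, cell u = cell v → |(p u).1 - (p v).1| ≤ 2 := by
    intro u v h
    obtain ⟨a1, a2⟩ := hb u
    obtain ⟨b1, b2⟩ := hb v
    rw [h] at a1 a2
    rw [abs_le]; constructor <;> linarith
  have L2 : ∀ u v : V, |(p u).1 - (p v).1| ≤ 2 → cell u ≤ cell v + 1 ∧ cell v ≤ cell u + 1 := by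
    intro u v h
    rw [abs_le] at h
    constructor
    · have : ⌊(p u).1 / 2⌋ ≤ ⌊(p v).1 / 2 + 1⌋ := Int.floor_le_floor (by linarith [h.2])
      rwa [Int.floor_add_one] at this
    · have : ⌊(p v).1 / 2⌋ ≤ ⌊(p u).1 / 2 + 1⌋ := Int.floor_le_floor (by linarith [h.1])
      rwa [Int.floor_add_one] at this
  -- closed neighbors are within x-distance 2
  have Lnbr : ∀ v w : V, w ∈ insert v ((unitSquareGraph p).neighborSet v) →
      |(p w).1 - (p v).1| ≤ 2 := by
    intro v w hw
    rcases hw with hw | hw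
    · subst hw; simp
    · have : (unitSquareGraph p).Adj v w := hw
      have h2 := this.2
      have := le_trans (le_max_left _ _) h2
      rwa [abs_sub_comm] at this
  -- representative per nonempty cell
  let repo : ℤ → Option V := fun n => if h : ∃ v : V, cell v = n then some h.choose else none
  have hrepo : ∀ v : V, ∃ u : V, repo (cell v) = some u ∧ cell u = cell v := by
    intro v
    have h : ∃ u : V, cell u = cell v := ⟨v, rfl⟩
    exact ⟨h.choose, dif_pos h, h.choose_spec⟩
  set χ : V → Option (Fin 2) :=
    fun v => if repo (cell v) = some v then some (if Even (cell v) then 0 else 1) else none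
    with hχdef
  refine ⟨χ, ?_⟩
  intro v
  obtain ⟨u, hu, hcu⟩ := hrepo v
  have humem : u ∈ insert v ((unitSquareGraph p).neighborSet v) := by
    by_cases h : u = v
    · exact h ▸ Set.mem_insert _ _
    · refine Set.mem_insert_of_mem _ ?_
      refine ⟨Ne.symm h, max_le ?_ ?_⟩
      · have := L1 u v hcu
        rwa [abs_sub_comm] at this
      · obtain ⟨hy1, hy2⟩ := hp v
        obtain ⟨hy1', hy2'⟩ := hp u
        rw [abs_le]; constructor <;> linarith
  have hχu : χ u = some (if Even (cell v) then 0 else 1) := by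
    rw [hχdef]
    simp only [hcu, hu, if_pos rfl]
    simp
  refine ⟨u, humem, ?_, ?_⟩
  · rw [hχu]; rfl
  · intro w hw hχw
    rw [hχu] at hχw
    -- w is colored, hence a representative of its own cell
    have hrw : repo (cell w) = some w := by
      by_contra hc
      rw [hχdef] at hχw
      simp only [if_neg hc] at hχw
      cases hχw
    have hcolor : (if Even (cell w) then (0 : Fin 2) else 1) = (if Even (cell v) then 0 else 1) := by
      rw [hχdef] at hχw
      simp only [if_pos hrw, Option.some.injEq] at hχw
      exact hχw
    have hpar : Even (cell w) ↔ Even (cell v) := by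
      by_cases h1 : Even (cell w) <;> by_cases h2 : Even (cell v) <;>
        simp [h1, h2] at hcolor ⊢
    have hdist := L2 w v (Lnbr v w hw)
    have hcell : cell w = cell v := by
      rw [Int.even_iff, Int.even_iff] at hpar
      omega
    rw [hcell, hu] at hrw
    injection hrw with h
    exact h.symm
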